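/- For every a ≥ 1, the two-row rectangular partition (a, a) of 2a satisfies |η_{(a,a)}| ≥ 2·D_a + D_{a−1}. -/

import Mathlib

/-- Derangement numbers: `D 0 = 1`, `D (m+1) = (m+1) * D m + (-1)^(m+1)`. -/
def derange : ℕ → ℤ
  | 0 => 1
  | n + 1 => (n + 1 : ℤ) * derange n + (-1) ^ (n + 1)

/-- Subtract one from every part and discard the parts that become zero
(deleting the first column of the Ferrers diagram). -/
def strip (l : List ℕ) : List ℕ := (l.map (· - 1)).filter (fun x => 0 < x)

lemma strip_measure (l : List ℕ) : (strip l).sum + (strip l).length ≤ l.sum := by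
  induction l with
  | nil => simp [strip]
  | cons x t ih =>
      simp only [strip, List.map_cons, List.filter_cons] at ih ⊢
      by_cases hx : 0 < x - 1 <;> simp [hx] <;> omega

/-- The eigenvalues of the derangement graph, defined by Renteln's recurrence:
`η ∅ = 1` and `η λ = (-1)^h (η (λ-ĥ) + (-1)^{λ₁} h η (λ-ĉ))`, where
`h = λ₁ + r - 1` is the hook size, `λ-ĥ = strip (tail λ)` removes the hook,
and `λ-ĉ = strip λ` removes the first column. -/
def eta : List ℕ → ℤ
  | [] => 1
  | a :: t =>
      (-1) ^ (a + t.length) *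
        (eta (strip t) + (-1) ^ a * ((a : ℤ) + t.length) * eta (strip (a :: t)))
  termination_by l => l.sum + l.length
  decreasing_by
  · have h1 := strip_measure t
    simp only [List.sum_cons, List.length_cons]
    omega
  · have h1 := strip_measure (a :: t)
    simp only [List.sum_cons, List.length_cons] at h1 ⊢
    omega

/-- `l` is (the list of parts of) a partition of `n`: weakly decreasing,
all parts positive, summing to `n`. -/
def IsPartition (n : ℕ) (l : List ℕ) : Prop :=
  l.Pairwise (· ≥ ·) ∧ (∀ x ∈ l, 0 < x) ∧ l.sum = n

/-- The hook partition `(a, 1^(n-a))` of `n`. -/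
def hookP (n a : ℕ) : List ℕ := a :: List.replicate (n - a) 1

lemma eta_nil : eta [] = 1 := by rw [eta]

lemma eta_cons (x : ℕ) (t : List ℕ) :
    eta (x :: t) = (-1) ^ (x + t.length) *
      (eta (strip t) + (-1) ^ x * ((x : ℤ) + t.length) * eta (strip (x :: t))) := by
  rw [eta]

lemma strip_one (x : ℕ) (hx : 0 < x) : strip [x + 1] = [x] := by
  simp [strip, List.filter_cons, hx]

lemma strip_two (x : ℕ) (hx : 0 < x) : strip [x + 1, x + 1] = [x, x] := by
  simp [strip, List.filter_cons, hx]

lemma eta_single : ∀ x : ℕ, eta [x] = derange x := by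
  intro x
  induction x with
  | zero => rw [eta_cons]; simp [strip, eta_nil, derange]
  | succ n ih =>
      rw [eta_cons]
      rcases Nat.eq_zero_or_pos n with h | h
      · subst h; simp [strip, eta_nil, derange, ih]
      · rw [strip_one n h]
        simp only [strip, List.map_nil, List.filter_nil, eta_nil, ih,
          List.length_nil, Nat.add_zero, Nat.cast_zero, add_zero]
        show _ = (n + 1 : ℤ) * derange n + (-1) ^ (n + 1)
        have : ((-1:ℤ)) ^ (n+1) * ((-1:ℤ)) ^ (n+1) = 1 := by
          rw [← pow_add]; exact Even.neg_one_pow ⟨n+1, by ring⟩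
        push_cast
        linear_combination (((n:ℤ)+1) * derange n) * this

lemma neg_one_pow_cases (k : ℕ) : ((-1:ℤ)) ^ k = 1 ∨ ((-1:ℤ)) ^ k = -1 := by
  rcases Nat.even_or_odd k with h | h
  · exact Or.inl h.neg_one_pow
  · exact Or.inr h.neg_one_pow

lemma eta_double (x : ℕ) (hx : 0 < x) :
    eta [x + 1, x + 1] = (-1) ^ x * derange x - ((x : ℤ) + 2) * eta [x, x] := by
  rw [eta_cons, strip_two x hx]
  have h1 : strip [x + 1] = [x] := strip_one x hx
  simp only [List.length_cons, List.length_nil, h1, eta_single]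
  have e1 : ((-1:ℤ)) ^ (x + 1 + 1) = (-1) ^ x := by rw [pow_succ, pow_succ]; ring
  have e2 : ((-1:ℤ)) ^ (x + 1) = -(-1) ^ x := by rw [pow_succ]; ring
  rw [e1, e2]
  have hs : ((-1:ℤ)) ^ x * (-1) ^ x = 1 := by
    rw [← pow_add]; exact Even.neg_one_pow ⟨x, by ring⟩
  push_cast
  linear_combination (-(((x:ℤ) + 2) * eta [x, x])) * hs

lemma derange_one_le : ∀ n : ℕ, n ≠ 1 → 1 ≤ derange n := by
  intro n hn
  induction n with
  | zero => simp [derange]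
  | succ m ih =>
      rcases Nat.eq_zero_or_pos m with h | h
      · omega
      rcases Nat.lt_or_ge m 2 with h2 | h2
      · interval_cases m
        · simp [derange]
      · have hm : 1 ≤ derange m := ih (by omega)
        show 1 ≤ (m + 1 : ℤ) * derange m + (-1) ^ (m + 1)
        have : -1 ≤ ((-1:ℤ)) ^ (m + 1) := by
          rcases neg_one_pow_cases (m + 1) with h | h <;> rw [h] <;> norm_num
        nlinarith [hm, this, (by exact_mod_cast h2 : (2:ℤ) ≤ m)]

lemma derange_nonneg (n : ℕ) : 0 ≤ derange n := by
  rcases eq_or_ne n 1 with h | h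
  · simp [h, derange]
  · linarith [derange_one_le n h]

lemma key : ∀ a : ℕ, 1 ≤ a → 2 * derange a + derange (a - 1) ≤ (-1) ^ a * eta [a, a] := by
  intro a ha
  induction a, ha using Nat.le_induction with
  | base =>
      have : eta [1, 1] = -1 := by
        rw [eta_cons]
        simp [strip, eta_nil]
      rw [this]; simp [derange]
  | succ n hn ih =>
      have hs : ((-1:ℤ)) ^ n * (-1) ^ n = 1 := by
        rw [← pow_add]; exact Even.neg_one_pow ⟨n, by ring⟩
      have e2 : ((-1:ℤ)) ^ (n + 1) = -(-1) ^ n := by rw [pow_succ]; ring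
      rw [eta_double n hn]
      have hrhs : ((-1:ℤ)) ^ (n + 1) * ((-1) ^ n * derange n - ((n:ℤ) + 2) * eta [n, n])
          = -derange n + ((n:ℤ) + 2) * ((-1) ^ n * eta [n, n]) := by
        rw [e2]; linear_combination (-(derange n)) * hs
      rw [hrhs]
      simp only [Nat.add_sub_cancel]
      have hd1 : derange (n + 1) = (n + 1 : ℤ) * derange n + (-1) ^ (n + 1) := rfl
      rw [hd1]
      have hmono : ((n:ℤ) + 2) * (2 * derange n + derange (n - 1))
          ≤ ((n:ℤ) + 2) * ((-1) ^ n * eta [n, n]) := by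
        apply mul_le_mul_of_nonneg_left ih
        positivity
      have hsign : -1 ≤ ((-1:ℤ)) ^ (n + 1) ∧ ((-1:ℤ)) ^ (n + 1) ≤ 1 := by
        rcases neg_one_pow_cases (n + 1) with h | h <;> rw [h] <;> norm_num
      rcases eq_or_ne n 2 with h2 | h2
      · subst h2
        norm_num [derange] at hmono ⊢
        linarith
      · have hD : 1 ≤ derange (n - 1) := derange_one_le _ (by omega)
        have hn3 : (1:ℤ) ≤ n := by exact_mod_cast hn
        nlinarith [hmono, hD, hsign.1, hsign.2, derange_nonneg n]

/-- For `a ≥ 1`, `|η_{(a,a)}| ≥ 2 D_a + D_{a-1}`. -/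
theorem eta_abs_two_row_lower (a : ℕ) (ha : 1 ≤ a) :
    2 * derange a + derange (a - 1) ≤ |eta [a, a]| := by
  have h1 := key a ha
  have h2 : (-1:ℤ) ^ a * eta [a, a] ≤ |eta [a, a]| := by
    rcases neg_one_pow_cases a with h | h <;> rw [h]
    · simpa using le_abs_self _
    · simpa using neg_le_abs (eta [a, a])
  linarith
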